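/- Let T be an x-monotone terrain, h₁ < h₂ two heights above T, and e an edge of T. If F(e,h) denotes the x-coordinate of the rightmost point on the horizontal line at height h from which e is fully visible, then F(e,h₁) ≤ F(e,h₂), i.e., F(e,·) is monotone non-decreasing in h. -/
import Mathlib


open Set

/-- An x-monotone polygonal terrain: vertices `x 0 < x 1 < ⋯ < x N` on the x-axis,
heights given by `f`, which is affine with slope `m i` and intercept `c i` on the
`i`-th edge. -/
structure Terrain where
  N : ℕ
  hN : 1 ≤ N
  x : Fin (N + 1) → ℝ
  hx : StrictMono x
  f : ℝ → ℝ
  m : Fin N → ℝ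
  c : Fin N → ℝ
  haff : ∀ i : Fin N, ∀ t ∈ Set.Icc (x i.castSucc) (x i.succ), f t = m i * t + c i

/-- Left endpoint of the domain of the terrain. -/
def Terrain.a (T : Terrain) : ℝ := T.x 0

/-- Right endpoint of the domain of the terrain. -/
def Terrain.b (T : Terrain) : ℝ := T.x (Fin.last T.N)

/-- Visibility: the segment from terrain point `p` to guard `u` stays on or above
the terrain. -/
def Terrain.Vis (T : Terrain) (p u : ℝ × ℝ) : Prop :=
  ∀ q ∈ segment ℝ p u, q.1 ∈ Set.Icc T.a T.b → T.f q.1 ≤ q.2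

/-- Full visibility of the `i`-th edge from the point `u`. -/
def Terrain.EdgeVis (T : Terrain) (i : Fin T.N) (u : ℝ × ℝ) : Prop :=
  ∀ t ∈ Set.Icc (T.x i.castSucc) (T.x i.succ), T.Vis (t, T.f t) u

/-- The x-coordinate `F(e,h)` of the rightmost point on the line `y = h` from which
the edge `e` is fully visible is monotone non-decreasing in `h`. -/
theorem stmt15 (T : Terrain) (i : Fin T.N) (h₁ h₂ : ℝ) (h₁₂ : h₁ < h₂)
    (hh₁ : ∀ t ∈ Set.Icc T.a T.b, T.f t ≤ h₁)
    (F₁ F₂ : ℝ)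
    (hF₁vis : T.EdgeVis i (F₁, h₁)) (hF₁max : ∀ p : ℝ, T.EdgeVis i (p, h₁) → p ≤ F₁)
    (hF₂vis : T.EdgeVis i (F₂, h₂)) (hF₂max : ∀ p : ℝ, T.EdgeVis i (p, h₂) → p ≤ F₂) :
    F₁ ≤ F₂ := by
  apply hF₂max
  intro t ht q hq hq1
  obtain ⟨a, b, ha, hb, hab, rfl⟩ := hq
  have h1 : T.f ((a • (t, T.f t) + b • (F₁, h₂)).1) ≤
      (a • (t, T.f t) + b • ((F₁ : ℝ), h₁)).2 := by
    apply hF₁vis t ht (a • (t, T.f t) + b • ((F₁ : ℝ), h₁))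
      ⟨a, b, ha, hb, hab, rfl⟩
    simpa using hq1
  simp only [Prod.smul_mk, Prod.mk_add_mk, smul_eq_mul] at h1 ⊢
  have : b * h₁ ≤ b * h₂ := mul_le_mul_of_nonneg_left h₁₂.le hb
  linarith
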